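/- Let L be an 𝒪_F-lattice chain in V. Then 𝔓(L) = {a ∈ A : a(L(i)) ⊆ L(i+1) for all i} is a two-sided ideal of the ring 𝔄(L) and equals the Jacobson radical of 𝔄(L). -/

import Mathlib

/-!
Context: `F` is a nonarchimedean local field, modelled as a field together with a
valuation subring `OF` which is a discrete valuation ring with finite residue field,
with a fixed uniformizer `ϖF` (an irreducible element of `OF`).  `V` is a nonzero
finite-dimensional `F`-vector space, `A = End_F V` and `G = GL_F(V) = (End_F V)ˣ`.
-/

noncomputable section

variable {F : Type*} [Field F] {V : Type*} [AddCommGroup V] [Module F V]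

/-- A subring of `F` acts on any `F`-vector space by restriction of scalars. -/
instance (priority := 100) ValuationSubring.instModuleOfModule (O : ValuationSubring F) :
    Module O V :=
  Module.compHom V O.subtype

/-- `L : ℤ → Submodule 𝒪 V` is an `𝒪`-lattice chain of period `e` : each `L i` is a
finitely generated `𝒪`-submodule spanning `V` over `F` (an `𝒪`-lattice), the chain is
strictly decreasing, and `ϖ • L i = L (i + e)` for all `i`. -/
structure IsLatticeChain (O : ValuationSubring F) (ϖ : O) (L : ℤ → Submodule O V) (e : ℕ) :
    Prop where
  period_pos : 0 < e
  fg : ∀ i, (L i).FG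
  spans : ∀ i, Submodule.span F ((L i : Set V)) = ⊤
  strict : ∀ i, L (i + 1) < L i
  smul_eq : ∀ (i : ℤ) (x : V), x ∈ L (i + e) ↔ ∃ y ∈ L i, x = (ϖ : F) • y

/-- The hereditary order `𝔄(L) = {a ∈ End_F V : a (L i) ⊆ L i for all i}`. -/
def hereditaryOrder (O : ValuationSubring F) (L : ℤ → Submodule O V) :
    Subring (Module.End F V) where
  carrier := {a | ∀ i, ∀ x ∈ L i, a x ∈ L i}
  zero_mem' := fun i x _ => by simpa using (L i).zero_mem
  one_mem' := fun i x hx => by simpa using hx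
  add_mem' := fun {a b} ha hb i x hx => by
    simpa using (L i).add_mem (ha i x hx) (hb i x hx)
  neg_mem' := fun {a} ha i x hx => by simpa using (L i).neg_mem (ha i x hx)
  mul_mem' := fun {a b} ha hb i x hx => by
    simpa [Module.End.mul_apply] using ha i _ (hb i x hx)

lemma mem_hereditaryOrder {O : ValuationSubring F} {L : ℤ → Submodule O V}
    {a : Module.End F V} :
    a ∈ hereditaryOrder O L ↔ ∀ i, ∀ x ∈ L i, a x ∈ L i := Iff.rfl

/-- The radical `𝔓(L) = {a ∈ End_F V : a (L i) ⊆ L (i+1) for all i}`, as a set. -/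
def radicalSet (O : ValuationSubring F) (L : ℤ → Submodule O V) :
    Set (Module.End F V) :=
  {a | ∀ i, ∀ x ∈ L i, a x ∈ L (i + 1)}

/-- The unit group `U(𝔄(L)) = 𝔄(L)ˣ` of the hereditary order, as a set of
endomorphisms: the elements of `𝔄(L)` invertible in `𝔄(L)`. -/
def orderUnits (O : ValuationSubring F) (L : ℤ → Submodule O V) :
    Set (Module.End F V) :=
  {a | a ∈ hereditaryOrder O L ∧ ∃ b ∈ hereditaryOrder O L, a * b = 1 ∧ b * a = 1}

/-- The unit group `U(𝔄(L)) = 𝔄(L)ˣ`, as a subgroup of `G = GL_F(V)`. -/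
def unitGroup (O : ValuationSubring F) (L : ℤ → Submodule O V) :
    Subgroup (Module.End F V)ˣ where
  carrier := {u | ↑u ∈ hereditaryOrder O L ∧ ↑u⁻¹ ∈ hereditaryOrder O L}
  one_mem' := ⟨one_mem _, by simpa using one_mem (hereditaryOrder O L)⟩
  mul_mem' := fun {a b} ha hb => ⟨mul_mem ha.1 hb.1, by
    rw [mul_inv_rev]; exact mul_mem hb.2 ha.2⟩
  inv_mem' := fun {a} ha => ⟨ha.2, by simpa using ha.1⟩

lemma mem_unitGroup {O : ValuationSubring F} {L : ℤ → Submodule O V}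
    {u : (Module.End F V)ˣ} :
    u ∈ unitGroup O L ↔
      (u : Module.End F V) ∈ hereditaryOrder O L ∧
        ((u⁻¹ : (Module.End F V)ˣ) : Module.End F V) ∈ hereditaryOrder O L := Iff.rfl

/-- Conjugation `g S g⁻¹` of a set of endomorphisms by an element `g ∈ GL_F(V)`. -/
def conjIm (g : (Module.End F V)ˣ) (S : Set (Module.End F V)) : Set (Module.End F V) :=
  (fun a => (g : Module.End F V) * a * ((g⁻¹ : (Module.End F V)ˣ) : Module.End F V)) '' S

lemma IsLatticeChain.antitone {O : ValuationSubring F} {ϖ : O} {L : ℤ → Submodule O V}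
    {e : ℕ} (hL : IsLatticeChain O ϖ L e) : Antitone L :=
  antitone_int_of_succ_le fun i => (hL.strict i).le

lemma IsLatticeChain.smul_mem_succ {O : ValuationSubring F} {ϖ : O} {L : ℤ → Submodule O V}
    {e : ℕ} (hL : IsLatticeChain O ϖ L e) (i : ℤ) {x : V} (hx : x ∈ L i) :
    (ϖ : F) • x ∈ L (i + 1) := by
  have h1 : (ϖ : F) • x ∈ L (i + e) := (hL.smul_eq i _).2 ⟨x, hx, rfl⟩
  have h2 : (i + 1 : ℤ) ≤ i + e := by have := hL.period_pos; omega
  exact hL.antitone h2 h1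

/-- The radical `𝔓(L)` as a (left) ideal of the hereditary order `𝔄(L)`. -/
def radicalIdeal (O : ValuationSubring F) (L : ℤ → Submodule O V) :
    Ideal (hereditaryOrder O L) where
  carrier := {a | ∀ i, ∀ x ∈ L i, (a : Module.End F V) x ∈ L (i + 1)}
  add_mem' := fun {a b} ha hb i x hx => by
    simpa using (L (i + 1)).add_mem (ha i x hx) (hb i x hx)
  zero_mem' := fun i x _ => by simpa using (L (i + 1)).zero_mem
  smul_mem' := fun c a ha i x hx => c.2 (i + 1) _ (ha i x hx)

lemma mem_radicalIdeal {O : ValuationSubring F} {L : ℤ → Submodule O V}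
    {a : hereditaryOrder O L} :
    a ∈ radicalIdeal O L ↔ ∀ i, ∀ x ∈ L i, (a : Module.End F V) x ∈ L (i + 1) := Iff.rfl

variable [FiniteDimensional F V] [Nontrivial V]
variable (OF : ValuationSubring F) [IsDiscreteValuationRing OF]
  [Finite (IsLocalRing.ResidueField OF)] (ϖF : OF)

section RadicalHelpers
variable {F : Type*} [Field F] {V : Type*} [AddCommGroup V] [Module F V]
variable {O : ValuationSubring F} {ϖ : O} {L : ℤ → Submodule O V} {e : ℕ}

lemma VS.smul_coe (c : O) (v : V) : c • v = (c : F) • v := rfl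

instance VS.tower (O : ValuationSubring F) : IsScalarTower O F V :=
  ⟨fun c x v => by
    change ((c : F) * x) • v = (c : F) • x • v
    rw [mul_smul]⟩

instance VS.nzsd (O : ValuationSubring F) : NoZeroSMulDivisors O V :=
  ⟨fun {c v} h => by
    rw [VS.smul_coe] at h
    rcases smul_eq_zero.1 h with h | h
    · exact Or.inl (by exact_mod_cast h)
    · exact Or.inr h⟩

/-- induction principle for `e`-periodic predicates on `ℤ`. -/
lemma periodic_int {P : ℤ → Prop} {i : ℤ} {e : ℕ} (he : 0 < e)
    (hper : ∀ t, P t ↔ P (t + e)) (hbase : ∀ t, i ≤ t → t < i + e → P t) (t : ℤ) : P t := by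
  generalize hμ : ((i - t).toNat + (t - (i + e - 1)).toNat) = n
  induction n using Nat.strong_induction_on generalizing t with
  | _ n ih =>
    subst hμ
    rcases lt_or_ge t i with h | h
    · refine (hper t).2 (ih _ ?_ (t + e) rfl)
      omega
    · rcases lt_or_ge t (i + e) with h' | h'
      · exact hbase t h h'
      · have := ih _ (by omega) (t - e) rfl
        rw [hper (t - e)] at this
        simpa using this

lemma IsLatticeChain.coe_ne_zero (hϖ : Irreducible ϖ) : (ϖ : F) ≠ 0 := by
  simpa using hϖ.ne_zero

lemma IsLatticeChain.pow_smul_mem_iff (hL : IsLatticeChain O ϖ L e) (i : ℤ) (m : ℕ) (x : V) :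
    x ∈ L (i + m * e) ↔ ∃ y ∈ L i, x = ((ϖ : F)) ^ m • y := by
  induction m generalizing x with
  | zero => simp
  | succ m ih =>
    have : (i + (m + 1 : ℕ) * e : ℤ) = (i + m * e) + e := by push_cast; ring
    rw [this, hL.smul_eq]
    constructor
    · rintro ⟨y, hy, rfl⟩
      obtain ⟨z, hz, rfl⟩ := (ih _).1 hy
      exact ⟨z, hz, by rw [smul_smul, ← pow_succ']⟩
    · rintro ⟨z, hz, rfl⟩
      refine ⟨(ϖ : F) ^ m • z, (ih _).2 ⟨z, hz, rfl⟩, ?_⟩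
      rw [smul_smul, ← pow_succ']

lemma exists_pow_mul_mem [IsDiscreteValuationRing O] (hϖ : Irreducible ϖ) (c : F) :
    ∃ k : ℕ, (ϖ : F) ^ k * c ∈ O := by
  rcases eq_or_ne c 0 with rfl | hc
  · exact ⟨0, by simpa using O.zero_mem⟩
  rcases O.mem_or_inv_mem c with h | h
  · exact ⟨0, by simpa using h⟩
  · obtain ⟨k, u, hu⟩ := IsDiscreteValuationRing.eq_unit_mul_pow_irreducible
      (x := (⟨c⁻¹, h⟩ : O)) (fun h0 => inv_ne_zero hc (by simpa using congrArg Subtype.val h0)) hϖ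
    refine ⟨k, ?_⟩
    have hc' : c⁻¹ = ((u : O) : F) * ((ϖ : F)) ^ k := by
      have := congrArg (fun z : O => (z : F)) hu
      push_cast at this
      simpa using this
    have hne : (ϖ : F) ≠ 0 := by simpa using hϖ.ne_zero
    have hu0 : ((u : O) : F) ≠ 0 := by
      intro h0
      exact u.ne_zero (by exact_mod_cast h0)
    have hmul : ((u : O) : F) * (((u⁻¹ : Oˣ) : O) : F) = 1 := by
      exact_mod_cast congrArg (fun z : O => (z : F)) u.mul_inv
    have hinv : ((u : O) : F)⁻¹ = (((u⁻¹ : Oˣ) : O) : F) :=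
      inv_eq_of_mul_eq_one_right hmul
    have hcc : c = ((u : O) : F)⁻¹ * ((ϖ : F) ^ k)⁻¹ := by
      rw [← mul_inv, ← hc', inv_inv]
    have : (ϖ : F) ^ k * c = (((u⁻¹ : Oˣ) : O) : F) := by
      rw [hcc, ← hinv]
      field_simp
    rw [this]
    exact SetLike.coe_mem _

lemma IsLatticeChain.exists_mem [IsDiscreteValuationRing O] (hL : IsLatticeChain O ϖ L e)
    (hϖ : Irreducible ϖ) (x : V) : ∃ i, x ∈ L i := by
  have hne : (ϖ : F) ≠ 0 := by simpa using hϖ.ne_zero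
  let U : Submodule F V :=
    { carrier := {v | ∃ i, v ∈ L i}
      add_mem' := by
        rintro v w ⟨i, hi⟩ ⟨j, hj⟩
        exact ⟨min i j, (L (min i j)).add_mem (hL.antitone (min_le_left i j) hi)
          (hL.antitone (min_le_right i j) hj)⟩
      zero_mem' := ⟨0, (L 0).zero_mem⟩
      smul_mem' := by
        rintro c v ⟨i, hi⟩
        obtain ⟨k, hk⟩ := exists_pow_mul_mem hϖ c
        refine ⟨i - k * e, ?_⟩
        have h1 : (ϖ : F) ^ k • (c • v) = (⟨_, hk⟩ : O) • v := by
          rw [VS.smul_coe, smul_smul]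
        have h2 : (ϖ : F) ^ k • (c • v) ∈ L (i - k * e + k * e) := by
          rw [h1, sub_add_cancel]
          exact (L i).smul_mem _ hi
        obtain ⟨y, hy, hy'⟩ := (hL.pow_smul_mem_iff (i - k * e) k _).1 h2
        have : c • v = y := smul_right_injective V (pow_ne_zero k hne) hy'
        rwa [this] }
  have hx : x ∈ Submodule.span F (L 0 : Set V) := by rw [hL.spans]; trivial
  exact Submodule.span_le.2 (fun v hv => show v ∈ U from ⟨0, hv⟩) hx

lemma IsLatticeChain.eq_zero_of_pow_smul [IsDiscreteValuationRing O]
    (hL : IsLatticeChain O ϖ L e) (hϖ : Irreducible ϖ) {x : V} {i : ℤ}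
    (h : ∀ m : ℕ, ∃ y ∈ L i, x = (ϖ : F) ^ m • y) : x = 0 := by
  classical
  by_contra hx
  obtain ⟨φ, hφ⟩ : ∃ φ : Module.Dual F V, φ x ≠ 0 := by
    by_contra h'
    push_neg at h'
    exact hx ((Module.forall_dual_apply_eq_zero_iff F x).1 h')
  set g : V →ₗ[F] F := (φ x)⁻¹ • φ with hg
  have hgx : g x = 1 := by simp [hg, inv_mul_cancel₀ hφ]
  obtain ⟨s, hs⟩ := hL.fg i
  have hK : ∃ K : ℕ, ∀ v ∈ L i, (ϖ : F) ^ K * g v ∈ O := by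
    have hex : ∀ v : {v // v ∈ s}, ∃ k : ℕ, (ϖ : F) ^ k * g v ∈ O :=
      fun v => exists_pow_mul_mem hϖ _
    choose k hk using hex
    have main : ∀ v ∈ Submodule.span O (s : Set V), (ϖ : F) ^ (s.attach.sup k) * g v ∈ O := by
      intro v hspan
      induction hspan using Submodule.span_induction with
      | mem w hw =>
        have hle : k ⟨w, hw⟩ ≤ s.attach.sup k := Finset.le_sup (Finset.mem_attach s _)
        have heq : (ϖ : F) ^ (s.attach.sup k) * g w
            = ((ϖ : O) : F) ^ (s.attach.sup k - k ⟨w, hw⟩) * ((ϖ : F) ^ (k ⟨w, hw⟩) * g w) := by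
          rw [← mul_assoc, ← pow_add, Nat.sub_add_cancel hle]
        rw [heq]
        exact mul_mem (pow_mem ϖ.2 _) (hk _)
      | zero => simpa using O.zero_mem
      | add a b _ _ ha hb => rw [map_add, mul_add]; exact add_mem ha hb
      | smul c a _ ha =>
        rw [VS.smul_coe, map_smul, smul_eq_mul, mul_left_comm]
        exact mul_mem c.2 ha
    exact ⟨s.attach.sup k, fun v hv => main v (by rw [hs]; exact hv)⟩
  obtain ⟨K, hK⟩ := hK
  obtain ⟨y, hy, hxy⟩ := h (K + 1)
  have h1 : (1 : F) = (ϖ : F) * ((ϖ : F) ^ K * g y) := by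
    rw [← hgx, hxy, map_smul, smul_eq_mul, ← mul_assoc, ← pow_succ']
  have : ϖ * (⟨_, hK y hy⟩ : O) = 1 := Subtype.ext (by simpa using h1.symm)
  exact hϖ.not_isUnit (IsUnit.of_mul_eq_one _ this)

lemma IsLatticeChain.one_sub_radical_unit [IsDiscreteValuationRing O] [FiniteDimensional F V]
    (hL : IsLatticeChain O ϖ L e) (hϖ : Irreducible ϖ) {p : Module.End F V}
    (hp : ∀ i, ∀ x ∈ L i, p x ∈ L (i + 1)) :
    ∃ t : Module.End F V, (∀ i, ∀ x ∈ L i, t x ∈ L i) ∧ (1 - p) * t = 1 ∧ t * (1 - p) = 1 := by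
  have hinj : Function.Injective (1 - p : Module.End F V) := by
    rw [← LinearMap.ker_eq_bot]
    rw [LinearMap.ker_eq_bot']
    intro z hz
    have hz' : z = p z := by
      have := congrArg (· + p z) hz
      simpa [sub_eq_iff_eq_add] using sub_eq_zero.1 hz
    obtain ⟨i, hi⟩ := hL.exists_mem hϖ z
    have hk : ∀ k : ℕ, z ∈ L (i + k) := by
      intro k
      induction k with
      | zero => simpa using hi
      | succ k ih =>
        have := hp (i + k) z ih
        rw [← hz'] at this
        have hcast : (i + (k + 1 : ℕ) : ℤ) = (i + k) + 1 := by push_cast; ring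
        rwa [hcast]
    refine hL.eq_zero_of_pow_smul hϖ (i := i) (fun m => ?_)
    exact (hL.pow_smul_mem_iff i m z).1 (by simpa using hk (m * e))
  have hsurj : Function.Surjective (1 - p : Module.End F V) :=
    (LinearMap.injective_iff_surjective).1 hinj
  let eqv := LinearEquiv.ofBijective (1 - p : Module.End F V) ⟨hinj, hsurj⟩
  refine ⟨(eqv.symm : V →ₗ[F] V), ?_, ?_, ?_⟩
  · intro i x hx
    set y := eqv.symm x with hy
    have hxy : x = y - p y := by
      have : (1 - p : Module.End F V) y = x := eqv.apply_symm_apply x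
      simpa [LinearMap.sub_apply] using this.symm
    obtain ⟨j, hj⟩ := hL.exists_mem hϖ y
    have hj' : y ∈ L (min j i) := hL.antitone (min_le_left j i) hj
    have key : ∀ k : ℕ, y ∈ L (min i (min j i + k)) := by
      intro k
      induction k with
      | zero => simpa using hL.antitone (by omega : min i (min j i + (0:ℕ)) ≤ min j i) hj'
      | succ k ih =>
        have hpy : p y ∈ L (min i (min j i + k) + 1) := hp _ y ih
        have h1 : y = x + p y := by rw [hxy]; abel
        have : y ∈ L (min i (min j i + (k+1:ℕ))) := by
          rw [h1]
          refine (L _).add_mem (hL.antitone ?_ hx) (hL.antitone ?_ hpy) <;> push_cast <;> omega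
        exact this
    have := key (i - min j i).toNat
    have hmin : min i (min j i + (i - min j i).toNat) = i := by
      have : ((i - min j i).toNat : ℤ) = i - min j i := Int.toNat_of_nonneg (by omega)
      omega
    rwa [hmin] at this
  · exact LinearMap.ext fun v => eqv.apply_symm_apply v
  · exact LinearMap.ext fun v => eqv.symm_apply_apply v

set_option maxHeartbeats 1000000 in
set_option synthInstance.maxHeartbeats 200000 in
lemma IsLatticeChain.exists_functional [IsDiscreteValuationRing O]
    (hL : IsLatticeChain O ϖ L e) (hϖ : Irreducible ϖ) {i : ℤ} {u : V}
    (hu : u ∈ L i) (hu' : u ∉ L (i + 1)) :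
    ∃ f : V →ₗ[F] F, f u = 1 ∧ (∀ v ∈ L i, f v ∈ O) ∧
      (∀ v ∈ L (i + 1), ∃ c : O, f v = (ϖ : F) * (c : F)) := by
  classical
  haveI : Module.Finite O ↥(L i) := Module.Finite.iff_fg.2 (hL.fg i)
  haveI : NoZeroSMulDivisors O ↥(L i) := ⟨fun {c v} h => by
    have h' : c • (v : V) = 0 := congrArg Subtype.val h
    rcases smul_eq_zero.1 h' with h1 | h1
    · exact Or.inl h1
    · exact Or.inr (Subtype.ext h1)⟩
  haveI : Module.Free O ↥(L i) := Module.free_of_finite_type_torsion_free'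
  have hsub : L (i + 1) ≤ L i := hL.antitone (by omega)
  set N : Submodule O ↥(L i) := (L (i + 1)).comap (L i).subtype with hN
  obtain ⟨n, snf⟩ := Submodule.smithNormalForm (Module.Free.chooseBasis O ↥(L i)) N
  have hϖmem : ∀ w : ↥(L i), (ϖ • w) ∈ N := by
    intro w
    show ((ϖ • w : ↥(L i)) : V) ∈ L (i + 1)
    rw [Submodule.coe_smul, VS.smul_coe]
    exact hL.smul_mem_succ i w.2
  have hreprsmul : ∀ j : Module.Free.ChooseBasisIndex O ↥(L i), snf.bM.repr (ϖ • snf.bM j) j = ϖ := by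
    intro j
    rw [map_smul, Finsupp.smul_apply, Module.Basis.repr_self, Finsupp.single_eq_same, smul_eq_mul,
      mul_one]
  have hrange : ∀ j : Module.Free.ChooseBasisIndex O ↥(L i), j ∈ Set.range snf.f := by
    intro j
    by_contra hj
    have := snf.repr_eq_zero_of_notMem_range (m := ⟨ϖ • snf.bM j, hϖmem _⟩) hj
    rw [Subtype.coe_mk, hreprsmul] at this
    exact hϖ.ne_zero this
  have hdvd : ∀ l : Fin n, snf.a l ∣ ϖ := by
    intro l
    have h1 := snf.repr_apply_embedding_eq_repr_smul
      (m := ⟨ϖ • snf.bM (snf.f l), hϖmem _⟩) (i := l)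
    rw [Subtype.coe_mk, hreprsmul, LinearEquiv.map_smul, Finsupp.smul_apply, smul_eq_mul] at h1
    exact ⟨_, h1⟩
  set u' : ↥(L i) := ⟨u, hu⟩ with hu'def
  have hu'N : u' ∉ N := fun h => hu' h
  have hdvd2 : ∀ m : ↥(L i), m ∈ N → ∀ l : Fin n, snf.a l ∣ snf.bM.repr m (snf.f l) := by
    intro m hm l
    have h1 := snf.repr_apply_embedding_eq_repr_smul (m := ⟨m, hm⟩) (i := l)
    rw [Subtype.coe_mk, LinearEquiv.map_smul, Finsupp.smul_apply, smul_eq_mul] at h1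
    exact ⟨_, h1⟩
  have hbad : ∃ l : Fin n, ¬ snf.a l ∣ snf.bM.repr u' (snf.f l) := by
    by_contra hall
    push_neg at hall
    choose q hq using hall
    set n₀ : ↥N := ∑ l, q l • snf.bN l with hn₀
    apply hu'N
    have : (↑n₀ : ↥(L i)) = u' := by
      apply snf.bM.repr.injective
      ext j
      obtain ⟨l, rfl⟩ := hrange j
      have h1 := snf.repr_apply_embedding_eq_repr_smul (m := n₀) (i := l)
      rw [h1, LinearEquiv.map_smul, Finsupp.smul_apply, smul_eq_mul, hn₀, Module.Basis.repr_sum_self]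
      exact_mod_cast (hq l).symm
    exact this ▸ n₀.2
  obtain ⟨l₀, hl₀⟩ := hbad
  set c₀ : O := snf.bM.repr u' (snf.f l₀) with hc₀
  have hanu : ¬ IsUnit (snf.a l₀) := fun h => hl₀ (h.dvd)
  have hϖa : ϖ ∣ snf.a l₀ := by
    obtain ⟨t, ht⟩ := hdvd l₀
    rcases hϖ.isUnit_or_isUnit ht with h | h
    · exact absurd h hanu
    · obtain ⟨tu, rfl⟩ := h
      exact ⟨↑tu⁻¹, by rw [ht]; exact (Units.mul_inv_cancel_right _ _).symm⟩
  have hc₀u : IsUnit c₀ := by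
    by_contra hnc
    have hmem : c₀ ∈ IsLocalRing.maximalIdeal O :=
      (IsLocalRing.mem_maximalIdeal _).2 (mem_nonunits_iff.2 hnc)
    rw [(IsDiscreteValuationRing.irreducible_iff_uniformizer ϖ).1 hϖ,
      Ideal.mem_span_singleton] at hmem
    exact hl₀ (dvd_trans (hdvd l₀) hmem)
  set cu : Oˣ := hc₀u.unit with hcu
  set g₀ : ↥(L i) →ₗ[O] O := snf.bM.coord (snf.f l₀) with hg₀
  have hg₀u' : g₀ u' = c₀ := rfl
  have hg₀N : ∀ m : ↥(L i), m ∈ N → ϖ ∣ g₀ m := fun m hm => dvd_trans hϖa (hdvd2 m hm l₀)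
  set w : Module.Free.ChooseBasisIndex O ↥(L i) → V := fun j => ((snf.bM j : ↥(L i)) : V)
    with hw
  have hliO : LinearIndependent O w :=
    snf.bM.linearIndependent.map' (L i).subtype (Submodule.ker_subtype _)
  have hliF : LinearIndependent F w := (LinearIndependent.iff_fractionRing O F).1 hliO
  have hspanO : ∀ v ∈ L i, v ∈ Submodule.span O (Set.range w) := by
    intro v hv
    have h1 : (⟨v, hv⟩ : ↥(L i)) ∈ Submodule.span O (Set.range ⇑snf.bM) :=
      Module.Basis.mem_span _ _
    have h2 := Submodule.mem_map_of_mem (f := (L i).subtype) h1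
    rw [Submodule.map_span, ← Set.range_comp] at h2
    exact h2
  have hspanF : ⊤ ≤ Submodule.span F (Set.range w) := by
    rw [← hL.spans i]
    exact Submodule.span_le.2 fun v hv => Submodule.span_subset_span O F _ (hspanO v hv)
  set bV : Module.Basis (Module.Free.ChooseBasisIndex O ↥(L i)) F V := Module.Basis.mk hliF hspanF with hbV
  set vals : Module.Free.ChooseBasisIndex O ↥(L i) → F :=
    fun j => ((((cu⁻¹ : Oˣ) : O) * g₀ (snf.bM j) : O) : F) with hvals
  set f : V →ₗ[F] F := bV.constr F vals with hf
  have key : ∀ v ∈ Submodule.span O (Set.range w), ∃ hv : v ∈ L i,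
      f v = ((((cu⁻¹ : Oˣ) : O) * g₀ ⟨v, hv⟩ : O) : F) := by
    intro v hv
    induction hv using Submodule.span_induction with
    | mem x hx =>
      obtain ⟨j, rfl⟩ := hx
      refine ⟨(snf.bM j).2, ?_⟩
      have h1 : f (w j) = vals j := by
        have : w j = bV j := by rw [hbV, Module.Basis.coe_mk]
        rw [this, hf]
        exact bV.constr_basis F vals j
      rw [h1, hvals]
    | zero =>
      refine ⟨(L i).zero_mem, ?_⟩
      have : (⟨(0 : V), (L i).zero_mem⟩ : ↥(L i)) = 0 := rfl
      rw [map_zero, this, map_zero, mul_zero]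
      exact (ZeroMemClass.coe_zero _).symm
    | add a b ha hb hA hB =>
      obtain ⟨ha', eqa⟩ := hA
      obtain ⟨hb', eqb⟩ := hB
      refine ⟨(L i).add_mem ha' hb', ?_⟩
      have : (⟨a + b, (L i).add_mem ha' hb'⟩ : ↥(L i)) = ⟨a, ha'⟩ + ⟨b, hb'⟩ := rfl
      rw [map_add, eqa, eqb, this, map_add, mul_add]
      push_cast
      ring
    | smul c x hx hX =>
      obtain ⟨hx', eqx⟩ := hX
      refine ⟨(L i).smul_mem c hx', ?_⟩
      have h2 : (⟨c • x, (L i).smul_mem c hx'⟩ : ↥(L i)) = c • ⟨x, hx'⟩ := rfl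
      have h5 : f (c • x) = (c : F) * f x := by
        rw [VS.smul_coe, map_smul, smul_eq_mul]
      rw [h5, eqx, h2, map_smul, smul_eq_mul, mul_left_comm]
      push_cast
      ring
  refine ⟨f, ?_, ?_, ?_⟩
  · obtain ⟨hv, heq⟩ := key u (hspanO u hu)
    have h3 : (⟨u, hv⟩ : ↥(L i)) = u' := rfl
    rw [heq, h3, hg₀u', show c₀ = (cu : O) from (hc₀u.unit_spec).symm, cu.inv_mul]
    exact OneMemClass.coe_one O
  · intro v hv
    obtain ⟨hv', heq⟩ := key v (hspanO v hv)
    rw [heq]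
    exact SetLike.coe_mem _
  · intro v hv
    have hvi : v ∈ L i := hsub hv
    obtain ⟨hv', heq⟩ := key v (hspanO v hvi)
    obtain ⟨d, hd⟩ := hg₀N ⟨v, hv'⟩ (show v ∈ L (i + 1) from hv)
    refine ⟨((cu⁻¹ : Oˣ) : O) * d, ?_⟩
    rw [heq, hd]
    push_cast
    ring

lemma IsLatticeChain.exists_transporter [IsDiscreteValuationRing O]
    (hL : IsLatticeChain O ϖ L e) (hϖ : Irreducible ϖ) {i : ℤ} {u x : V}
    (hu : u ∈ L i) (hu' : u ∉ L (i + 1)) (hx : x ∈ L i) :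
    ∃ y : Module.End F V, (∀ j, ∀ v ∈ L j, y v ∈ L j) ∧ y u = x := by
  obtain ⟨f, hf1, hf2, hf3⟩ := hL.exists_functional hϖ hu hu'
  have hne : (ϖ : F) ≠ 0 := by simpa using hϖ.ne_zero
  refine ⟨LinearMap.smulRight f x, ?_, by rw [LinearMap.smulRight_apply, hf1, one_smul]⟩
  intro j
  have base : ∀ t, i ≤ t → t < i + e → ∀ v ∈ L t, f v • x ∈ L t := by
    intro t ht1 ht2 v hv
    rcases eq_or_lt_of_le ht1 with rfl | htgt
    · have hc : f v ∈ O := hf2 v hv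
      have : f v • x = (⟨f v, hc⟩ : O) • x := by rw [VS.smul_coe]
      rw [this]
      exact (L _).smul_mem _ hx
    · obtain ⟨c, hc⟩ := hf3 v (hL.antitone (by omega) hv)
      have h5 : (c : F) • x ∈ L i := by
        rw [← VS.smul_coe]
        exact (L i).smul_mem c hx
      have h6 : (ϖ : F) • ((c : F) • x) ∈ L (i + e) := (hL.smul_eq i _).2 ⟨_, h5, rfl⟩
      have h7 : f v • x = (ϖ : F) • ((c : F) • x) := by rw [hc, smul_smul]
      rw [h7]
      exact hL.antitone (by omega) h6
  have per : ∀ t, (∀ v ∈ L t, f v • x ∈ L t) ↔ (∀ v ∈ L (t + e), f v • x ∈ L (t + e)) := by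
    intro t
    constructor
    · intro h v hv
      obtain ⟨w', hw', rfl⟩ := (hL.smul_eq t v).1 hv
      have : f ((ϖ : F) • w') • x = (ϖ : F) • (f w' • x) := by
        rw [map_smul, smul_eq_mul, smul_smul]
      rw [this]
      exact (hL.smul_eq t _).2 ⟨f w' • x, h w' hw', rfl⟩
    · intro h v hv
      have h1 : (ϖ : F) • v ∈ L (t + e) := (hL.smul_eq t _).2 ⟨v, hv, rfl⟩
      have h2 := h _ h1
      rw [map_smul, smul_eq_mul, ← smul_smul] at h2
      obtain ⟨z, hz, hzeq⟩ := (hL.smul_eq t _).1 h2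
      rwa [smul_right_injective V hne hzeq]
  exact periodic_int hL.period_pos per base j

variable [FiniteDimensional F V]
variable (OF : ValuationSubring F) [IsDiscreteValuationRing OF] (ϖF : OF)

set_option maxHeartbeats 1000000 in
set_option synthInstance.maxHeartbeats 400000 in
theorem radicalIdeal_eq_jacobson'
    (hϖF : Irreducible ϖF)
    (L : ℤ → Submodule OF V) (e : ℕ) (hL : IsLatticeChain OF ϖF L e) :
    (radicalSet OF L ⊆ (hereditaryOrder OF L : Set (Module.End F V))) ∧
    (∀ a : hereditaryOrder OF L,
      a ∈ radicalIdeal OF L ↔ (a : Module.End F V) ∈ radicalSet OF L) ∧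
    (∀ a ∈ radicalIdeal OF L, ∀ r : hereditaryOrder OF L,
      r * a ∈ radicalIdeal OF L ∧ a * r ∈ radicalIdeal OF L) ∧
    radicalIdeal OF L = (⊥ : Ideal (hereditaryOrder OF L)).jacobson := by
  refine ⟨?_, fun a => Iff.rfl, ?_, ?_⟩
  · intro a ha i x hx
    exact hL.antitone (by omega) (ha i x hx)
  · intro a ha r
    exact ⟨fun i x hx => r.2 (i + 1) _ (ha i x hx), fun i x hx => ha i _ (r.2 i x hx)⟩
  · apply le_antisymm
    · rw [Ideal.jacobson]
      refine le_sInf ?_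
      rintro J ⟨-, hJmax⟩
      intro p hp
      by_contra hpJ
      have hlt : J < J ⊔ Ideal.span {p} := lt_of_le_of_ne le_sup_left (fun h => hpJ
        (h ▸ Submodule.mem_sup_right (Ideal.subset_span rfl)))
      have hsup : J ⊔ Ideal.span {p} = ⊤ := (Ideal.isMaximal_def.1 hJmax).2 _ hlt
      have h1 : (1 : hereditaryOrder OF L) ∈ J ⊔ Ideal.span {p} := by
        rw [hsup]; trivial
      obtain ⟨m, hm, s, hs, hms⟩ := Submodule.mem_sup.1 h1
      obtain ⟨r, rfl⟩ := Submodule.mem_span_singleton.1 hs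
      have hq : r • p ∈ radicalIdeal OF L := (radicalIdeal OF L).smul_mem r hp
      have hm' : m = 1 - r • p := eq_sub_of_add_eq hms
      obtain ⟨t, ht, hts, hst⟩ := hL.one_sub_radical_unit hϖF
        (p := ((r • p : hereditaryOrder OF L) : Module.End F V)) (fun i x hx => hq i x hx)
      have hcoe : (m : Module.End F V) = 1 - ((r • p : hereditaryOrder OF L) :
          Module.End F V) := by rw [hm']; rfl
      have hunit : ((⟨t, ht⟩ : hereditaryOrder OF L) * m) = 1 := by
        apply Subtype.ext
        show t * (m : Module.End F V) = 1
        rw [hcoe]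
        exact hst
      have h1J : (1 : hereditaryOrder OF L) ∈ J := hunit ▸ Ideal.mul_mem_left J _ hm
      exact hJmax.ne_top ((Ideal.eq_top_iff_one J).2 h1J)
    · intro a ha i x hx
      by_contra hax
      have hui : (a : Module.End F V) x ∈ L i := a.2 i x hx
      have hxi1 : x ∉ L (i + 1) := fun h => hax (a.2 (i + 1) x h)
      obtain ⟨y, hy, hyu⟩ := hL.exists_transporter hϖF hui hax hx
      set M : Ideal (hereditaryOrder OF L) :=
        { carrier := {c | (c : Module.End F V) x ∈ L (i + 1)}
          add_mem' := fun {c d} hc hd => by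
            simpa using (L (i + 1)).add_mem hc hd
          zero_mem' := by simpa using (L (i + 1)).zero_mem
          smul_mem' := fun r c hc => r.2 (i + 1) _ hc } with hM
      have hMtop : M ≠ ⊤ := by
        intro h
        apply hxi1
        have : (1 : hereditaryOrder OF L) ∈ M := by rw [h]; trivial
        change ((1 : hereditaryOrder OF L) : Module.End F V) x ∈ L (i + 1) at this
        simpa using this
      obtain ⟨J, hJmax, hMJ⟩ := Ideal.exists_le_maximal M hMtop
      have haJ : a ∈ J := by
        rw [Ideal.jacobson] at ha
        exact Ideal.mem_sInf.1 ha ⟨bot_le, hJmax⟩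
      have h2 : (⟨y, hy⟩ : hereditaryOrder OF L) * a ∈ J := Ideal.mul_mem_left J _ haJ
      have h3 : 1 - (⟨y, hy⟩ : hereditaryOrder OF L) * a ∈ M := by
        have hc1 : ((1 - (⟨y, hy⟩ : hereditaryOrder OF L) * a : hereditaryOrder OF L) :
            Module.End F V) = 1 - y * (a : Module.End F V) := rfl
        show ((1 - (⟨y, hy⟩ : hereditaryOrder OF L) * a : hereditaryOrder OF L) :
          Module.End F V) x ∈ L (i + 1)
        rw [hc1, LinearMap.sub_apply, Module.End.one_apply, Module.End.mul_apply, hyu, sub_self]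
        exact (L (i + 1)).zero_mem
      have h4 : (1 : hereditaryOrder OF L) ∈ J := by
        have h5 := J.add_mem (hMJ h3) h2
        simpa using h5
      exact hJmax.ne_top ((Ideal.eq_top_iff_one J).2 h4)

end RadicalHelpers

/-- `𝔓(L)` is a two-sided ideal of the ring `𝔄(L)` and equals the
Jacobson radical of `𝔄(L)` (the Jacobson radical of the zero ideal, i.e. the
intersection of the maximal (left) ideals). -/
theorem radicalIdeal_eq_jacobson
    (hϖF : Irreducible ϖF)
    (L : ℤ → Submodule OF V) (e : ℕ) (hL : IsLatticeChain OF ϖF L e) :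
    (radicalSet OF L ⊆ (hereditaryOrder OF L : Set (Module.End F V))) ∧
    (∀ a : hereditaryOrder OF L,
      a ∈ radicalIdeal OF L ↔ (a : Module.End F V) ∈ radicalSet OF L) ∧
    (∀ a ∈ radicalIdeal OF L, ∀ r : hereditaryOrder OF L,
      r * a ∈ radicalIdeal OF L ∧ a * r ∈ radicalIdeal OF L) ∧
    radicalIdeal OF L = (⊥ : Ideal (hereditaryOrder OF L)).jacobson :=
  radicalIdeal_eq_jacobson' OF ϖF hϖF L e hL

end
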